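/- Sublinearity of the minimal doubling constant: let K̃(F) be the infimum of |A+A|/|A| over affinely generating subsets A ⊆ Z_2^n (over all n) with 2^n/|A| = F, for F of the form 2^a/b ≥ 1. If F₁ < F₂ are both in the domain, then K̃(F₁)/F₁ ≥ K̃(F₂)/F₂. -/

import Mathlib

open Finset Pointwise

/-- `K̃(F)`: the infimum of the doubling constant `|A+A|/|A|` over affinely generating
subsets `A ⊆ (ZMod 2)^n` (over all `n`) with `2^n/|A| = F`. -/
noncomputable def Ktilde (F : ℝ) : ℝ :=
  sInf {r : ℝ | ∃ (n : ℕ) (A : Finset (Fin n → ZMod 2)),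
    affineSpan (ZMod 2) (A : Set (Fin n → ZMod 2)) = ⊤ ∧
    (2 ^ n : ℝ) / A.card = F ∧
    r = ((A + A).card : ℝ) / A.card}

section Helpers

lemma prodAddProd' {M N : Type*} [DecidableEq M] [DecidableEq N] [AddGroup M] [AddGroup N]
    (s s' : Finset M) (t t' : Finset N) :
    (s ×ˢ t) + (s' ×ˢ t') = (s + s') ×ˢ (t + t') := by
  ext ⟨x, y⟩
  simp only [Finset.mem_add, Finset.mem_product, Prod.exists, Prod.mk_add_mk, Prod.mk.injEq]
  constructor
  · rintro ⟨a, b, ⟨ha, hb⟩, c, d, ⟨hc, hd⟩, rfl, rfl⟩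
    exact ⟨⟨a, ha, c, hc, rfl⟩, ⟨b, hb, d, hd, rfl⟩⟩
  · rintro ⟨⟨a, ha, c, hc, rfl⟩, ⟨b, hb, d, hd, rfl⟩⟩
    exact ⟨a, b, ⟨ha, hb⟩, c, d, ⟨hc, hd⟩, rfl, rfl⟩

lemma cardV' (n : ℕ) : Fintype.card (Fin n → ZMod 2) = 2 ^ n := by
  rw [Fintype.card_fun, ZMod.card, Fintype.card_fin]

lemma prodSpanTop' {k M N : Type*} [Field k] [AddCommGroup M] [Module k M]
    [AddCommGroup N] [Module k N] {s : Set M}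
    (hs : affineSpan k s = ⊤) :
    affineSpan k (s ×ˢ (Set.univ : Set N)) = ⊤ := by
  have hsne : s.Nonempty := AffineSubspace.nonempty_of_affineSpan_eq_top k M M hs
  obtain ⟨a, ha⟩ := hsne
  have hne : (s ×ˢ (Set.univ : Set N)).Nonempty := ⟨(a, 0), ha, trivial⟩
  rw [AffineSubspace.affineSpan_eq_top_iff_vectorSpan_eq_top_of_nonempty k _ _ hne]
  have hvs : vectorSpan k s = ⊤ := AffineSubspace.vectorSpan_eq_top_of_affineSpan_eq_top k _ _ hs
  rw [vectorSpan_def]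
  rw [eq_top_iff]
  rintro ⟨x, y⟩ -
  have h1 : ((x, 0) : M × N) ∈ Submodule.span k
      ((s ×ˢ (Set.univ : Set N)) -ᵥ (s ×ˢ (Set.univ : Set N))) := by
    have hx : x ∈ Submodule.span k (s -ᵥ s) := by
      rw [← vectorSpan_def, hvs]; trivial
    have := Submodule.mem_map_of_mem (f := LinearMap.inl k M N) hx
    rw [Submodule.map_span] at this
    refine Submodule.span_mono ?_ this
    rintro - ⟨v, ⟨p, hp, q, hq, rfl⟩, rfl⟩
    exact ⟨(p, 0), ⟨hp, trivial⟩, (q, 0), ⟨hq, trivial⟩, by simp⟩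
  have h2 : ((0, y) : M × N) ∈ Submodule.span k
      ((s ×ˢ (Set.univ : Set N)) -ᵥ (s ×ˢ (Set.univ : Set N))) := by
    have hy : y ∈ (⊤ : Submodule k N) := trivial
    rw [← Submodule.span_univ] at hy
    have := Submodule.mem_map_of_mem (f := LinearMap.inr k M N) hy
    rw [Submodule.map_span] at this
    refine Submodule.span_mono ?_ this
    rintro - ⟨v, -, rfl⟩
    exact ⟨(a, v), ⟨ha, trivial⟩, (a, 0), ⟨ha, trivial⟩, by simp⟩
  have := Submodule.add_mem _ h1 h2
  simpa using this

/-- The base affinely spanning finset: `0` together with the standard basis. -/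
noncomputable def B0' (n : ℕ) : Finset (Fin n → ZMod 2) :=
  insert 0 ((Finset.univ : Finset (Fin n)).image fun i => Pi.single i 1)

lemma B0'_card (n : ℕ) : (B0' n).card ≤ n + 1 := by
  classical
  refine (Finset.card_insert_le _ _).trans ?_
  simpa using Nat.add_le_add_right (Finset.card_image_le.trans (by simp)) 1

lemma B0'_span (n : ℕ) : affineSpan (ZMod 2) ((B0' n : Set (Fin n → ZMod 2))) = ⊤ := by
  classical
  have hne : (B0' n : Set (Fin n → ZMod 2)).Nonempty := ⟨0, by simp [B0']⟩
  rw [AffineSubspace.affineSpan_eq_top_iff_vectorSpan_eq_top_of_nonempty (ZMod 2) _ _ hne]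
  rw [vectorSpan_def, eq_top_iff, ← (Pi.basisFun (ZMod 2) (Fin n)).span_eq]
  refine Submodule.span_le.2 ?_
  rintro - ⟨i, rfl⟩
  apply Submodule.subset_span
  refine ⟨Pi.single i 1, ?_, 0, ?_, by simp⟩
  · simp [B0']
  · simp [B0']

lemma exists_spanning_card' {n m : ℕ} (h1 : n + 1 ≤ m) (h2 : m ≤ 2 ^ n) :
    ∃ A : Finset (Fin n → ZMod 2),
      affineSpan (ZMod 2) (A : Set (Fin n → ZMod 2)) = ⊤ ∧ A.card = m := by
  classical
  obtain ⟨A, hBA, -, hcard⟩ := Finset.exists_subsuperset_card_eq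
    (Finset.subset_univ (B0' n)) ((B0'_card n).trans h1)
    (by rw [Finset.card_univ, cardV']; exact h2)
  refine ⟨A, ?_, hcard⟩
  rw [eq_top_iff, ← B0'_span n]
  exact affineSpan_mono _ (by exact_mod_cast hBA)

lemma exists_spanning_subset_card' {N : ℕ} {A' : Finset (Fin N → ZMod 2)}
    (hspan : affineSpan (ZMod 2) (A' : Set (Fin N → ZMod 2)) = ⊤)
    {m : ℕ} (h1 : N + 1 ≤ m) (h2 : m ≤ A'.card) :
    ∃ B : Finset (Fin N → ZMod 2), B ⊆ A' ∧ B.card = m ∧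
      affineSpan (ZMod 2) (B : Set (Fin N → ZMod 2)) = ⊤ := by
  classical
  obtain ⟨t, hts, htspan, htind⟩ :=
    exists_affineIndependent (ZMod 2) (Fin N → ZMod 2) (A' : Set (Fin N → ZMod 2))
  have hfin : t.Finite := Set.Finite.subset A'.finite_toSet hts
  rw [← hfin.coe_toFinset] at hts htspan htind
  have htcard : hfin.toFinset.card ≤ (B0' N).card := by
    refine AffineIndependent.card_le_card_of_subset_affineSpan htind ?_
    intro x hx
    rw [B0'_span N]
    trivial
  have hts' : hfin.toFinset ⊆ A' := by exact_mod_cast hts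
  obtain ⟨B, htB, hBA, hcard⟩ := Finset.exists_subsuperset_card_eq hts'
    ((htcard.trans (B0'_card N)).trans h1) h2
  refine ⟨B, hBA, hcard, ?_⟩
  rw [eq_top_iff, ← hspan, ← htspan]
  exact affineSpan_mono _ (by exact_mod_cast htB)

lemma lift_finset' {n : ℕ} (k : ℕ) {A : Finset (Fin n → ZMod 2)}
    (hspan : affineSpan (ZMod 2) (A : Set (Fin n → ZMod 2)) = ⊤) :
    ∃ A' : Finset (Fin (n + k) → ZMod 2),
      affineSpan (ZMod 2) (A' : Set (Fin (n + k) → ZMod 2)) = ⊤ ∧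
      A'.card = A.card * 2 ^ k ∧ (A' + A').card = (A + A).card * 2 ^ k := by
  classical
  let E : ((Fin n → ZMod 2) × (Fin k → ZMod 2)) ≃ₗ[ZMod 2] (Fin (n + k) → ZMod 2) :=
    ((LinearEquiv.funCongrLeft (ZMod 2) (ZMod 2) finSumFinEquiv).trans
      (LinearEquiv.sumArrowLequivProdArrow (Fin n) (Fin k) (ZMod 2) (ZMod 2))).symm
  refine ⟨(A ×ˢ (Finset.univ : Finset (Fin k → ZMod 2))).image E, ?_, ?_, ?_⟩
  · have himg : ((A ×ˢ (Finset.univ : Finset (Fin k → ZMod 2))).image E : Set _)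
        = E.toLinearMap.toAffineMap ''
          ((A : Set (Fin n → ZMod 2)) ×ˢ (Set.univ : Set (Fin k → ZMod 2))) := by
      rw [Finset.coe_image, Finset.coe_product, Finset.coe_univ]
      rfl
    rw [himg]
    exact AffineMap.span_eq_top_of_surjective _ E.surjective (prodSpanTop' hspan)
  · rw [Finset.card_image_of_injective _ E.injective, Finset.card_product, Finset.card_univ,
      cardV']
  · rw [← Finset.image_add, Finset.card_image_of_injective _ E.injective, prodAddProd',
      Finset.univ_add_univ, Finset.card_product, Finset.card_univ, cardV']

lemma two_mul_le_two_pow' (j : ℕ) (hj : 1 ≤ j) : 2 * j ≤ 2 ^ j := by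
  obtain ⟨i, rfl⟩ := Nat.exists_eq_add_of_le hj
  have h1 : i < 2 ^ i := Nat.lt_two_pow_self
  have h2 : 2 ^ (1 + i) = 2 * 2 ^ i := by rw [pow_add]; ring
  omega

/-- The defining set for `Ktilde`. -/
def KtildeSet (F : ℝ) : Set ℝ :=
  {r : ℝ | ∃ (n : ℕ) (A : Finset (Fin n → ZMod 2)),
    affineSpan (ZMod 2) (A : Set (Fin n → ZMod 2)) = ⊤ ∧
    (2 ^ n : ℝ) / A.card = F ∧
    r = ((A + A).card : ℝ) / A.card}

lemma KtildeSet_bddBelow (F : ℝ) : BddBelow (KtildeSet F) := by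
  refine ⟨0, fun r hr => ?_⟩
  obtain ⟨n, A, -, -, rfl⟩ := hr
  positivity

lemma KtildeSet_nonempty (a b : ℕ) (hb : 0 < b) (F : ℝ) (hF : F = (2 ^ a : ℝ) / b)
    (h1 : 1 ≤ F) : (KtildeSet F).Nonempty := by
  have hble : b ≤ 2 ^ a := by
    have hbpos : (0 : ℝ) < b := by exact_mod_cast hb
    have : (b : ℝ) ≤ 2 ^ a := by
      rw [hF, le_div_iff₀ hbpos, one_mul] at h1
      exact h1
    exact_mod_cast this
  set n := 2 * a + 2 with hn
  set m := b * 2 ^ (a + 2) with hm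
  have h2a : a < 2 ^ a := Nat.lt_two_pow_self
  have hmge : n + 1 ≤ m := by
    have : 2 ^ (a + 2) = 4 * 2 ^ a := by rw [pow_add]; ring
    have hb1 : 1 ≤ b := hb
    calc n + 1 = 2 * a + 3 := by omega
    _ ≤ 4 * 2 ^ a := by omega
    _ = 2 ^ (a + 2) := this.symm
    _ ≤ b * 2 ^ (a + 2) := Nat.le_mul_of_pos_left _ hb
  have hmle : m ≤ 2 ^ n := by
    calc m ≤ 2 ^ a * 2 ^ (a + 2) := Nat.mul_le_mul_right _ hble
    _ = 2 ^ n := by rw [← pow_add]; congr 1; omega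
  obtain ⟨A, hspan, hcard⟩ := exists_spanning_card' hmge hmle
  refine ⟨((A + A).card : ℝ) / A.card, n, A, hspan, ?_, rfl⟩
  rw [hcard, hF]
  have hbne : (b : ℝ) ≠ 0 := by exact_mod_cast hb.ne'
  have hmR : (m : ℝ) = b * 2 ^ (a + 2) := by rw [hm]; push_cast; ring
  rw [hmR, div_eq_div_iff (by positivity) hbne]
  rw [show n = a + (a + 2) from by omega, pow_add]
  ring

end Helpers

theorem stmt13 (a₁ b₁ a₂ b₂ : ℕ) (hb₁ : 0 < b₁) (hb₂ : 0 < b₂) (F₁ F₂ : ℝ)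
    (hF₁ : F₁ = (2 ^ a₁ : ℝ) / b₁) (hF₂ : F₂ = (2 ^ a₂ : ℝ) / b₂)
    (h₁ : 1 ≤ F₁) (h₂ : 1 ≤ F₂) (hlt : F₁ < F₂) :
    Ktilde F₂ / F₂ ≤ Ktilde F₁ / F₁ := by
  have hKdef : ∀ F : ℝ, Ktilde F = sInf (KtildeSet F) := fun F => rfl
  have hF₁pos : (0 : ℝ) < F₁ := lt_of_lt_of_le one_pos h₁
  have hF₂pos : (0 : ℝ) < F₂ := lt_of_lt_of_le one_pos h₂
  -- key step: for every r in the F₁-set there is e in the F₂-set with e ≤ (F₂/F₁) * r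
  have key : ∀ r ∈ KtildeSet F₁, ∃ e ∈ KtildeSet F₂, e ≤ F₂ / F₁ * r := by
    rintro r ⟨n, A, hspan, hc, rfl⟩
    have hAne : A.card ≠ 0 := by
      rintro h0
      rw [h0] at hc
      simp at hc
      rw [← hc] at h₁
      norm_num at h₁
    have hApos : (0 : ℝ) < A.card := by positivity
    have hAmul : (A.card : ℝ) * F₁ = 2 ^ n := by
      field_simp at hc
      linarith [hc]
    set k := n + 2 * a₂ + 2 with hk
    set j := 2 * n + a₂ + 2 with hj
    obtain ⟨A', hspan', hcard', hadd'⟩ := lift_finset' k hspan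
    set m := b₂ * 2 ^ j with hm
    have hNj : n + k = j + a₂ := by omega
    have hb₂ne : (b₂ : ℝ) ≠ 0 := by exact_mod_cast hb₂.ne'
    have hmR : (m : ℝ) = b₂ * 2 ^ j := by rw [hm]; push_cast; ring
    have hmF : (m : ℝ) * F₂ = 2 ^ n * 2 ^ k := by
      rw [hmR, hF₂]
      field_simp
      have h2 : (2:ℝ) ^ n * 2 ^ k = 2 ^ j * 2 ^ a₂ := by
        rw [← pow_add, ← pow_add, hNj]
      rw [h2]
    have hmpos : 0 < m := by positivity
    have hmRpos : (0 : ℝ) < m := by exact_mod_cast hmpos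
    -- N + 1 ≤ m
    have hjle : n + k + 1 ≤ m := by
      have h2j : 2 * j ≤ 2 ^ j := two_mul_le_two_pow' j (by omega)
      have : 2 ^ j ≤ m := Nat.le_mul_of_pos_left _ hb₂
      omega
    -- m ≤ A'.card
    have hA'R : (A'.card : ℝ) * F₁ = 2 ^ n * 2 ^ k := by
      rw [hcard']
      push_cast
      rw [mul_comm (A.card : ℝ) (2 ^ k : ℝ), mul_assoc, hAmul]
      ring
    have hmle : m ≤ A'.card := by
      have hR : (m : ℝ) ≤ A'.card := by
        have h1 : (m : ℝ) * F₂ = (A'.card : ℝ) * F₁ := by rw [hmF, hA'R]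
        nlinarith [hA'R, hmF]
      exact_mod_cast hR
    obtain ⟨B, hBA, hBcard, hBspan⟩ := exists_spanning_subset_card' hspan' hjle hmle
    have hBF : (2 ^ (n + k) : ℝ) / B.card = F₂ := by
      rw [hBcard]
      rw [div_eq_iff (by exact_mod_cast hmpos.ne'), pow_add, ← hmF]
      ring
    refine ⟨((B + B).card : ℝ) / B.card, ⟨n + k, B, hBspan, hBF, rfl⟩, ?_⟩
    have hBB : ((B + B).card : ℝ) ≤ ((A + A).card : ℝ) * 2 ^ k := by
      have : (B + B).card ≤ (A' + A').card :=
        Finset.card_le_card (Finset.add_subset_add hBA hBA)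
      rw [hadd'] at this
      exact_mod_cast this
    rw [hBcard, div_mul_div_comm, div_le_div_iff₀ hmRpos (by positivity)]
    calc ((B + B).card : ℝ) * (F₁ * A.card)
        ≤ ((A + A).card : ℝ) * 2 ^ k * (F₁ * A.card) := by
          apply mul_le_mul_of_nonneg_right hBB (by positivity)
      _ = ((A + A).card : ℝ) * 2 ^ k * ((A.card : ℝ) * F₁) := by ring
      _ = ((A + A).card : ℝ) * 2 ^ k * 2 ^ n := by rw [hAmul]
      _ = ((A + A).card : ℝ) * (2 ^ n * 2 ^ k) := by ring
      _ = ((A + A).card : ℝ) * ((m : ℝ) * F₂) := by rw [hmF]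
      _ = F₂ * (A + A).card * m := by ring
  have hS₁ne : (KtildeSet F₁).Nonempty := KtildeSet_nonempty a₁ b₁ hb₁ F₁ hF₁ h₁
  have hmain : F₁ / F₂ * Ktilde F₂ ≤ Ktilde F₁ := by
    rw [hKdef, hKdef]
    refine le_csInf hS₁ne fun r hr => ?_
    obtain ⟨e, he, hle⟩ := key r hr
    have h1 : sInf (KtildeSet F₂) ≤ e := csInf_le (KtildeSet_bddBelow F₂) he
    have h2 : sInf (KtildeSet F₂) ≤ F₂ / F₁ * r := h1.trans hle
    rw [div_mul_eq_mul_div, div_le_iff₀ hF₂pos]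
    calc F₁ * sInf (KtildeSet F₂) ≤ F₁ * (F₂ / F₁ * r) := by
          apply mul_le_mul_of_nonneg_left h2 hF₁pos.le
      _ = r * F₂ := by field_simp
  rw [div_le_div_iff₀ hF₂pos hF₁pos]
  rw [div_mul_eq_mul_div, div_le_iff₀ hF₂pos] at hmain
  linarith [hmain]
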